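/- Let δ > 0, β ∈ ℝ, and let R : [0,∞) → ℂ be continuous with ∫_0^∞ |R(s)|² e^{-δ s} ds < ∞. Define Ψ(s) = ∫_0^s e^{-iβ(s-y)} R(y) dy. Then ∫_0^∞ |Ψ(s)|² e^{-δ s} ds < ∞, and δ (∫_0^∞ |Ψ(s)|² e^{-δ s} ds)^{1/2} ≤ 2 (∫_0^∞ |R(s)|² e^{-δ s} ds)^{1/2}. -/

import Mathlib

open MeasureTheory Filter
open scoped ENNReal

/-- For Ψ(s) = ∫_0^s e^{-iβ(s-y)} R(y) dy with R ∈ L²_w, one has Ψ ∈ L²_w and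
δ ‖Ψ‖_{L²_w} ≤ 2 ‖R‖_{L²_w} where w(s) = e^{-δ s}. -/
theorem stmt8 (δ β : ℝ) (hδ : 0 < δ) (R : ℝ → ℂ) (hR : Continuous R)
    (hRint : IntegrableOn (fun s : ℝ => ‖R s‖ ^ 2 * Real.exp (-δ * s)) (Set.Ioi 0))
    (Ψ : ℝ → ℂ)
    (hΨ : ∀ s : ℝ, Ψ s = ∫ y in (0:ℝ)..s, Complex.exp (-(Complex.I * β) * (s - y)) * R y) :
    IntegrableOn (fun s : ℝ => ‖Ψ s‖ ^ 2 * Real.exp (-δ * s)) (Set.Ioi 0) ∧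
    δ * Real.sqrt (∫ s in Set.Ioi (0:ℝ), ‖Ψ s‖ ^ 2 * Real.exp (-δ * s))
      ≤ 2 * Real.sqrt (∫ s in Set.Ioi (0:ℝ), ‖R s‖ ^ 2 * Real.exp (-δ * s)) := by
  have hexp : ∀ c : ℝ, Continuous fun y : ℝ => Real.exp (c * y) := fun c =>
    Real.continuous_exp.comp (continuous_const.mul continuous_id)
  have hcexp : ∀ c : ℂ, Continuous fun y : ℝ => Complex.exp (c * y) := fun c =>
    Complex.continuous_exp.comp (continuous_const.mul Complex.continuous_ofReal)
  -- continuity of Ψ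
  have hΨc : Continuous Ψ := by
    have h1 : ∀ s : ℝ, Ψ s = Complex.exp (-(Complex.I * β) * s) *
        ∫ y in (0:ℝ)..s, Complex.exp ((Complex.I * β) * y) * R y := by
      intro s
      rw [hΨ, ← intervalIntegral.integral_const_mul]
      refine intervalIntegral.integral_congr fun y _ => ?_
      rw [← mul_assoc, ← Complex.exp_add]
      ring_nf
    rw [funext h1]
    exact ((hcexp (-(Complex.I * β))).mul
      (intervalIntegral.continuous_primitive
        (fun a b => ((hcexp (Complex.I * β)).mul hR).intervalIntegrable a b) 0))
  -- step 1: pointwise bound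
  have hstep1 : ∀ s : ℝ, 0 ≤ s → ‖Ψ s‖ ≤ ∫ y in (0:ℝ)..s, ‖R y‖ := by
    intro s hs
    rw [hΨ]
    refine (intervalIntegral.norm_integral_le_integral_norm hs).trans_eq ?_
    refine intervalIntegral.integral_congr fun y _ => ?_
    rw [norm_mul]
    have : ‖Complex.exp (-(Complex.I * β) * (s - y))‖ = 1 := by
      rw [Complex.norm_exp]
      simp [Complex.mul_re]
    rw [this, one_mul]
  -- the weighted kernel function
  set k : ℝ → ℝ≥0∞ := fun y => ENNReal.ofReal (Real.exp (-(δ/2) * y) * ‖R y‖^2) with hk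
  have hkc : Continuous k := ENNReal.continuous_ofReal.comp ((hexp (-(δ/2))).mul (hR.norm.pow 2))
  set H : ℝ → ℝ≥0∞ := fun s => ∫⁻ y in Set.Ioc (0:ℝ) s, k y with hH
  -- step 2: Cauchy–Schwarz
  have hCS : ∀ s : ℝ, 0 ≤ s →
      ENNReal.ofReal (∫ y in (0:ℝ)..s, ‖R y‖) ^ (2:ℝ) ≤
        ENNReal.ofReal (2/δ * Real.exp (δ/2 * s)) * H s := by
    intro s hs
    set f : ℝ → ℝ≥0∞ := fun y => ENNReal.ofReal (Real.exp (δ/4 * y)) with hf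
    set g : ℝ → ℝ≥0∞ := fun y => ENNReal.ofReal (Real.exp (-(δ/4) * y) * ‖R y‖) with hg
    have hfg : ∀ y, f y * g y = ENNReal.ofReal ‖R y‖ := by
      intro y
      rw [hf, hg]
      simp only
      rw [← ENNReal.ofReal_mul (Real.exp_nonneg _), ← mul_assoc, ← Real.exp_add]
      norm_num
    have hf2 : ∀ y, f y ^ (2:ℝ) = ENNReal.ofReal (Real.exp (δ/2 * y)) := by
      intro y
      rw [hf]
      simp only
      rw [ENNReal.ofReal_rpow_of_pos (Real.exp_pos _), ← Real.exp_mul]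
      congr 1
      ring
    have hg2 : ∀ y, g y ^ (2:ℝ) = k y := by
      intro y
      rw [hg, hk]
      simp only
      rw [ENNReal.ofReal_rpow_of_nonneg (mul_nonneg (Real.exp_nonneg _) (norm_nonneg _)) (by norm_num),
        show ((2:ℝ)) = ((2:ℕ):ℝ) from by norm_num, Real.rpow_natCast]
      congr 1
      rw [mul_pow, pow_two (Real.exp _), ← Real.exp_add]
      congr 2
      ring
    have hmf : AEMeasurable f (volume.restrict (Set.Ioc (0:ℝ) s)) :=
      (ENNReal.continuous_ofReal.comp (hexp (δ/4))).measurable.aemeasurable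
    have hmg : AEMeasurable g (volume.restrict (Set.Ioc (0:ℝ) s)) :=
      (ENNReal.continuous_ofReal.comp ((hexp (-(δ/4))).mul hR.norm)).measurable.aemeasurable
    have hold := ENNReal.lintegral_mul_le_Lp_mul_Lq (volume.restrict (Set.Ioc (0:ℝ) s))
      (⟨by norm_num, by norm_num, by norm_num⟩ : Real.HolderConjugate 2 2) hmf hmg
    have hL : ENNReal.ofReal (∫ y in (0:ℝ)..s, ‖R y‖) = ∫⁻ y in Set.Ioc (0:ℝ) s, (f * g) y := by
      rw [intervalIntegral.integral_of_le hs,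
        ofReal_integral_eq_lintegral_ofReal (hR.norm.integrableOn_Ioc)
          (Filter.Eventually.of_forall fun y => norm_nonneg _)]
      exact lintegral_congr fun y => (hfg y).symm
    have hA : (∫⁻ y in Set.Ioc (0:ℝ) s, f y ^ (2:ℝ)) ≤ ENNReal.ofReal (2/δ * Real.exp (δ/2 * s)) := by
      have heq : (∫⁻ y in Set.Ioc (0:ℝ) s, f y ^ (2:ℝ))
          = ENNReal.ofReal (∫ y in Set.Ioc (0:ℝ) s, Real.exp (δ/2 * y)) := by
        rw [ofReal_integral_eq_lintegral_ofReal
          ((hexp (δ/2)).integrableOn_Ioc)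
          (Filter.Eventually.of_forall fun y => Real.exp_nonneg _)]
        exact lintegral_congr fun y => hf2 y
      rw [heq]
      apply ENNReal.ofReal_le_ofReal
      rw [← intervalIntegral.integral_of_le hs]
      have hc : (δ/2) ≠ 0 := by positivity
      calc ∫ y in (0:ℝ)..s, Real.exp (δ/2 * y)
          = (δ/2)⁻¹ • ∫ y in (δ/2*0:ℝ)..(δ/2*s), Real.exp y := by
            rw [← intervalIntegral.integral_comp_mul_left _ hc]
        _ = (δ/2)⁻¹ * (Real.exp (δ/2*s) - 1) := by
            rw [integral_exp]; norm_num
        _ ≤ 2/δ * Real.exp (δ/2 * s) := by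
            rw [show (δ/2)⁻¹ = 2/δ by field_simp]
            have h1 : Real.exp (δ/2*s) - 1 ≤ Real.exp (δ/2*s) := by linarith
            have h2 : (0:ℝ) ≤ 2/δ := by positivity
            nlinarith [Real.exp_pos (δ/2*s)]
    have hB : (∫⁻ y in Set.Ioc (0:ℝ) s, g y ^ (2:ℝ)) = ∫⁻ y in Set.Ioc (0:ℝ) s, k y :=
      lintegral_congr fun y => hg2 y
    calc ENNReal.ofReal (∫ y in (0:ℝ)..s, ‖R y‖) ^ (2:ℝ)
        = (∫⁻ y in Set.Ioc (0:ℝ) s, (f * g) y) ^ (2:ℝ) := by rw [hL]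
      _ ≤ ((∫⁻ y in Set.Ioc (0:ℝ) s, f y ^ (2:ℝ)) ^ (1/2:ℝ)
            * (∫⁻ y in Set.Ioc (0:ℝ) s, g y ^ (2:ℝ)) ^ (1/2:ℝ)) ^ (2:ℝ) :=
          ENNReal.rpow_le_rpow hold (by norm_num)
      _ = (∫⁻ y in Set.Ioc (0:ℝ) s, f y ^ (2:ℝ)) * (∫⁻ y in Set.Ioc (0:ℝ) s, g y ^ (2:ℝ)) := by
          rw [ENNReal.mul_rpow_of_nonneg _ _ (by norm_num), ← ENNReal.rpow_mul, ← ENNReal.rpow_mul]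
          norm_num
      _ ≤ ENNReal.ofReal (2/δ * Real.exp (δ/2 * s)) * ∫⁻ y in Set.Ioc (0:ℝ) s, k y := by
          rw [hB]; exact mul_le_mul_left hA _
  -- Tonelli / swap estimate
  have hswap : (∫⁻ s in Set.Ioi (0:ℝ), ENNReal.ofReal (Real.exp (-(δ/2) * s)) * H s)
      ≤ ENNReal.ofReal (2/δ) *
        ∫⁻ y in Set.Ioi (0:ℝ), ENNReal.ofReal (‖R y‖^2 * Real.exp (-δ * y)) := by
    set F : ℝ × ℝ → ℝ≥0∞ := fun p =>
      ENNReal.ofReal (Real.exp (-(δ/2) * p.1)) * Set.indicator {q : ℝ × ℝ | q.2 ≤ q.1} (fun q => k q.2) p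
      with hF
    have hFmeas : Measurable F := by
      apply Measurable.mul
      · exact ((ENNReal.continuous_ofReal.comp (hexp (-(δ/2)))).comp continuous_fst).measurable
      · exact Measurable.indicator (hkc.measurable.comp measurable_snd)
          (measurableSet_le measurable_snd measurable_fst)
    have hinner : ∀ s : ℝ, (∫⁻ y in Set.Ioc (0:ℝ) s, k y)
        = ∫⁻ y in Set.Ioi (0:ℝ), Set.indicator {q : ℝ × ℝ | q.2 ≤ q.1} (fun q => k q.2) (s, y) := by
      intro s
      have : (fun y => Set.indicator {q : ℝ × ℝ | q.2 ≤ q.1} (fun q => k q.2) (s, y))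
          = Set.indicator (Set.Iic s) k := by
        funext y
        by_cases h : y ≤ s <;> simp [Set.indicator_apply, h]
      rw [this, lintegral_indicator measurableSet_Iic k,
        Measure.restrict_restrict measurableSet_Iic]
      congr 1
      rw [Set.Iic_inter_Ioi]
    have key : (∫⁻ s in Set.Ioi (0:ℝ), ENNReal.ofReal (Real.exp (-(δ/2) * s)) *
          ∫⁻ y in Set.Ioc (0:ℝ) s, k y)
        = ∫⁻ y in Set.Ioi (0:ℝ), ∫⁻ s in Set.Ioi (0:ℝ), F (s, y) := by
      have h0 : (∫⁻ s in Set.Ioi (0:ℝ), ENNReal.ofReal (Real.exp (-(δ/2) * s)) *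
          ∫⁻ y in Set.Ioc (0:ℝ) s, k y)
          = ∫⁻ s in Set.Ioi (0:ℝ), ∫⁻ y in Set.Ioi (0:ℝ), F (s, y) := by
        refine lintegral_congr fun s => ?_
        rw [hinner s, ← lintegral_const_mul' _ _ ENNReal.ofReal_ne_top]
      rw [h0]
      exact lintegral_lintegral_swap (f := fun s y => F (s, y)) hFmeas.aemeasurable
    have hins : ∀ y : ℝ, 0 < y → (∫⁻ s in Set.Ioi (0:ℝ), F (s, y))
        = ENNReal.ofReal (2/δ * Real.exp (-(δ/2) * y)) * k y := by
      intro y hy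
      have h1 : (fun s => F (s, y)) = Set.indicator (Set.Ici y)
          (fun s => ENNReal.ofReal (Real.exp (-(δ/2) * s)) * k y) := by
        funext s
        by_cases h : y ≤ s <;> simp [hF, Set.indicator_apply, h]
      have hsub : Set.Ici y ∩ Set.Ioi (0:ℝ) = Set.Ici y :=
        Set.inter_eq_self_of_subset_left fun x hx => lt_of_lt_of_le hy hx
      rw [h1, lintegral_indicator measurableSet_Ici _,
        Measure.restrict_restrict measurableSet_Ici, hsub,
        lintegral_mul_const' _ _ ENNReal.ofReal_ne_top]
      have h2 : (∫⁻ s in Set.Ici y, ENNReal.ofReal (Real.exp (-(δ/2) * s)))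
          = ENNReal.ofReal (2/δ * Real.exp (-(δ/2) * y)) := by
        rw [← setLIntegral_congr (Ioi_ae_eq_Ici (a := y)),
          ← ofReal_integral_eq_lintegral_ofReal (exp_neg_integrableOn_Ioi y (by positivity))
            (Filter.Eventually.of_forall fun x => Real.exp_nonneg _)]
        congr 1
        have hb : (0:ℝ) < δ/2 := by positivity
        have h := integral_comp_mul_left_Ioi (fun u => Real.exp (-u)) y hb
        simp only [neg_mul]
        rw [h, integral_exp_neg_Ioi, smul_eq_mul, inv_div]
      rw [h2]
    calc (∫⁻ s in Set.Ioi (0:ℝ), ENNReal.ofReal (Real.exp (-(δ/2) * s)) *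
          ∫⁻ y in Set.Ioc (0:ℝ) s, k y)
        = ∫⁻ y in Set.Ioi (0:ℝ), ∫⁻ s in Set.Ioi (0:ℝ), F (s, y) := key
      _ = ∫⁻ y in Set.Ioi (0:ℝ), ENNReal.ofReal (2/δ * Real.exp (-(δ/2) * y)) * k y :=
          setLIntegral_congr_fun measurableSet_Ioi (fun y hy => hins y hy)
      _ = ENNReal.ofReal (2/δ) * ∫⁻ y in Set.Ioi (0:ℝ), ENNReal.ofReal (‖R y‖^2 * Real.exp (-δ * y)) := by
          rw [← lintegral_const_mul' _ _ ENNReal.ofReal_ne_top]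
          refine lintegral_congr fun y => ?_
          rw [hk]
          simp only
          rw [← ENNReal.ofReal_mul (by positivity), ← ENNReal.ofReal_mul (by positivity)]
          congr 1
          have he : Real.exp (-(δ/2) * y) * Real.exp (-(δ/2) * y) = Real.exp (-δ * y) := by
            rw [← Real.exp_add]
            congr 1
            ring
          calc 2/δ * Real.exp (-(δ/2) * y) * (Real.exp (-(δ/2) * y) * ‖R y‖^2)
              = 2/δ * (‖R y‖^2 * (Real.exp (-(δ/2) * y) * Real.exp (-(δ/2) * y))) := by ring
            _ = 2/δ * (‖R y‖^2 * Real.exp (-δ * y)) := by rw [he]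
      _ ≤ ENNReal.ofReal (2/δ) *
          ∫⁻ y in Set.Ioi (0:ℝ), ENNReal.ofReal (‖R y‖^2 * Real.exp (-δ * y)) := le_rfl
  -- main lintegral bound
  set IR : ℝ≥0∞ := ∫⁻ y in Set.Ioi (0:ℝ), ENNReal.ofReal (‖R y‖^2 * Real.exp (-δ * y)) with hIR
  set L : ℝ≥0∞ := ∫⁻ s in Set.Ioi (0:ℝ), ENNReal.ofReal (‖Ψ s‖^2 * Real.exp (-δ * s)) with hL
  have hHmono : Monotone H := fun a b hab =>
    lintegral_mono_set (Set.Ioc_subset_Ioc_right hab)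
  have hHmeas : Measurable H := hHmono.measurable
  have hkey : L ≤ ENNReal.ofReal (2/δ) *
      ∫⁻ s in Set.Ioi (0:ℝ), ENNReal.ofReal (Real.exp (-(δ/2) * s)) * H s := by
    rw [hL, ← lintegral_const_mul' _ _ ENNReal.ofReal_ne_top]
    refine setLIntegral_mono
      (measurable_const.mul ((ENNReal.continuous_ofReal.comp (hexp (-(δ/2)))).measurable.mul hHmeas))
      fun s hs => ?_
    have hs' : (0:ℝ) ≤ s := (Set.mem_Ioi.mp hs).le
    have hΨ2 : ENNReal.ofReal (‖Ψ s‖^2) ≤ ENNReal.ofReal (2/δ * Real.exp (δ/2 * s)) * H s := by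
      have e1 : ENNReal.ofReal (‖Ψ s‖^2) = ENNReal.ofReal ‖Ψ s‖ ^ (2:ℝ) := by
        rw [ENNReal.ofReal_rpow_of_nonneg (norm_nonneg _) (by norm_num),
          show ((2:ℝ)) = ((2:ℕ):ℝ) from by norm_num, Real.rpow_natCast]
      rw [e1]
      refine le_trans ?_ (hCS s hs')
      exact ENNReal.rpow_le_rpow (ENNReal.ofReal_le_ofReal (hstep1 s hs')) (by norm_num)
    calc ENNReal.ofReal (‖Ψ s‖^2 * Real.exp (-δ * s))
        = ENNReal.ofReal (‖Ψ s‖^2) * ENNReal.ofReal (Real.exp (-δ * s)) :=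
          ENNReal.ofReal_mul (by positivity)
      _ ≤ (ENNReal.ofReal (2/δ * Real.exp (δ/2 * s)) * H s) * ENNReal.ofReal (Real.exp (-δ * s)) :=
          mul_le_mul_left hΨ2 _
      _ = (ENNReal.ofReal (2/δ * Real.exp (δ/2 * s)) * ENNReal.ofReal (Real.exp (-δ * s))) * H s := by
          ring
      _ = ENNReal.ofReal (2/δ) * (ENNReal.ofReal (Real.exp (-(δ/2) * s)) * H s) := by
          rw [← ENNReal.ofReal_mul (by positivity), ← mul_assoc,
            ← ENNReal.ofReal_mul (by positivity)]
          congr 2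
          rw [mul_assoc, ← Real.exp_add]
          congr 2
          ring
  have hLle : L ≤ ENNReal.ofReal (2/δ) * (ENNReal.ofReal (2/δ) * IR) :=
    hkey.trans (mul_le_mul_right hswap _)
  have hIRlt : IR < ⊤ := hRint.lintegral_lt_top
  have hbne : ENNReal.ofReal (2/δ) * (ENNReal.ofReal (2/δ) * IR) ≠ ⊤ :=
    ENNReal.mul_ne_top ENNReal.ofReal_ne_top (ENNReal.mul_ne_top ENNReal.ofReal_ne_top hIRlt.ne)
  have hLlt : L < ⊤ := lt_of_le_of_lt hLle (lt_top_iff_ne_top.mpr hbne)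
  -- integrability
  have hint : IntegrableOn (fun s : ℝ => ‖Ψ s‖ ^ 2 * Real.exp (-δ * s)) (Set.Ioi 0) := by
    refine ⟨((hΨc.norm.pow 2).mul (hexp (-δ))).aestronglyMeasurable, ?_⟩
    rw [hasFiniteIntegral_iff_ofReal (Filter.Eventually.of_forall fun s => by positivity)]
    exact hLlt
  refine ⟨hint, ?_⟩
  -- values of the integrals
  have hvalΨ : (∫ s in Set.Ioi (0:ℝ), ‖Ψ s‖ ^ 2 * Real.exp (-δ * s)) = L.toReal := by
    rw [hL, ← ofReal_integral_eq_lintegral_ofReal hint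
      (Filter.Eventually.of_forall fun s => by positivity),
      ENNReal.toReal_ofReal (integral_nonneg fun s => by positivity)]
  have hvalR : (∫ s in Set.Ioi (0:ℝ), ‖R s‖ ^ 2 * Real.exp (-δ * s)) = IR.toReal := by
    rw [hIR, ← ofReal_integral_eq_lintegral_ofReal hRint
      (Filter.Eventually.of_forall fun s => by positivity),
      ENNReal.toReal_ofReal (integral_nonneg fun s => by positivity)]
  rw [hvalΨ, hvalR]
  have hle : L.toReal ≤ (2/δ) * ((2/δ) * IR.toReal) := by
    have := ENNReal.toReal_mono hbne hLle
    rwa [ENNReal.toReal_mul, ENNReal.toReal_mul,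
      ENNReal.toReal_ofReal (by positivity : (0:ℝ) ≤ 2/δ)] at this
  have hIRnn : 0 ≤ IR.toReal := ENNReal.toReal_nonneg
  have h2δ : (0:ℝ) ≤ 2/δ := by positivity
  have hsq : Real.sqrt ((2/δ) * ((2/δ) * IR.toReal)) = (2/δ) * Real.sqrt IR.toReal := by
    rw [show (2/δ) * ((2/δ) * IR.toReal) = (2/δ)^2 * IR.toReal by ring,
      Real.sqrt_mul (by positivity), Real.sqrt_sq h2δ]
  have h1 : Real.sqrt L.toReal ≤ (2/δ) * Real.sqrt IR.toReal := by
    rw [← hsq]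
    exact Real.sqrt_le_sqrt hle
  calc δ * Real.sqrt L.toReal ≤ δ * ((2/δ) * Real.sqrt IR.toReal) :=
        mul_le_mul_of_nonneg_left h1 hδ.le
    _ = 2 * Real.sqrt IR.toReal := by
        field_simp
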